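/- In a module with basis given by a diagonal matrix, any two minimal bases of a submodule M of (ℤ/dℤ)^n have the same multiset of diagonal invariants: if diag(b₁,…,b_r) and diag(c₁,…,c_r) (with respect to possibly different free bases of (ℤ/dℤ)^n, and with bᵢ ∣ bⱼ, cᵢ ∣ cⱼ for i < j) are both basis matrices for M, then for each i the elements bᵢ and cᵢ have the same additive order in ℤ/dℤ. -/

import Mathlib

open Finset Submodule

lemma card_span_diag {d n r : ℕ} [NeZero d] (hrn : r ≤ n)
    (f : Module.Basis (Fin n) (ZMod d) (Fin n → ZMod d)) (b : Fin r → ZMod d) :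
    Nat.card (Submodule.span (ZMod d)
      (Set.range fun i : Fin r => b i • f (Fin.castLE hrn i))) = ∏ i, addOrderOf (b i) := by
  classical
  set v : Fin r → (Fin n → ZMod d) := fun i => f (Fin.castLE hrn i) with hv
  have hvind : LinearIndependent (ZMod d) v :=
    f.linearIndependent.comp _ (Fin.castLE_injective hrn)
  let L : (Fin r → ZMod d) →ₗ[ZMod d] (Fin n → ZMod d) :=
    { toFun := fun x => ∑ i, x i • v i
      map_add' := by intro x y; simp [add_smul, Finset.sum_add_distrib]
      map_smul' := by intro a x; simp [Finset.smul_sum, smul_smul] }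
  have hLinj : Function.Injective L := by
    rw [← LinearMap.ker_eq_bot]
    refine (Submodule.eq_bot_iff _).2 fun x hx => ?_
    have hx0 : ∑ i, x i • v i = 0 := hx
    have := (Fintype.linearIndependent_iff.1 hvind) x hx0
    funext i; exact this i
  set K : Fin r → Submodule (ZMod d) (ZMod d) :=
    fun i => Submodule.span (ZMod d) {b i} with hK
  have hspan : Submodule.span (ZMod d) (Set.range fun i => b i • v i)
      = Submodule.map L (Submodule.pi Set.univ K) := by
    apply le_antisymm
    · rw [Submodule.span_le]
      rintro _ ⟨i, rfl⟩
      refine ⟨Pi.single i (b i), ?_, ?_⟩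
      · intro j _
        rcases eq_or_ne j i with rfl | hji
        · simpa [hK] using Submodule.mem_span_singleton_self (b j)
        · simp [Pi.single_eq_of_ne hji, hK]
      · have hL : L (Pi.single i (b i)) = ∑ j, (Pi.single i (b i) : Fin r → ZMod d) j • v j := rfl
        rw [hL, Finset.sum_eq_single i (fun j _ hji => by simp [Pi.single_eq_of_ne hji])
          (fun h => absurd (Finset.mem_univ i) h)]
        simp
    · rw [Submodule.map_le_iff_le_comap]
      intro x hx
      rw [Submodule.mem_comap]
      have hL : L x = ∑ j, x j • v j := rfl
      rw [hL]
      refine Submodule.sum_mem _ fun j _ => ?_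
      obtain ⟨a, ha⟩ := Submodule.mem_span_singleton.1 (hx j (Set.mem_univ j))
      rw [← ha, smul_eq_mul, mul_smul]
      exact Submodule.smul_mem _ a (Submodule.subset_span ⟨j, rfl⟩)
  rw [hspan]
  rw [(Nat.card_congr (Submodule.equivMapOfInjective L hLinj
    (Submodule.pi Set.univ K)).toEquiv).symm]
  have e2 : Nat.card (Submodule.pi Set.univ K) = ∏ i, Nat.card (K i) := by
    rw [← Nat.card_pi]
    exact Nat.card_congr ⟨fun x i => ⟨x.1 i, x.2 i (Set.mem_univ i)⟩,
      fun y => ⟨fun i => y i, fun i _ => (y i).2⟩, fun x => rfl, fun y => rfl⟩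
  rw [e2]
  refine Finset.prod_congr rfl fun i _ => ?_
  rw [← Nat.card_zmultiples (b i)]
  refine Nat.card_congr (Equiv.setCongr ?_)
  ext x
  simp only [SetLike.mem_coe, Submodule.mem_span_singleton,
    AddSubgroup.mem_zmultiples_iff, hK]
  constructor
  · rintro ⟨a, rfl⟩
    refine ⟨(a.val : ℤ), ?_⟩
    rw [natCast_zsmul, nsmul_eq_mul, ZMod.natCast_rightInverse a, smul_eq_mul]
  · rintro ⟨k, rfl⟩
    exact ⟨(k : ZMod d), by rw [smul_eq_mul, ← zsmul_eq_mul]⟩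

lemma diag_aux {r : ℕ} (o p : Fin r → ℕ)
    (hopos : ∀ i, 0 < o i) (hppos : ∀ i, 0 < p i)
    (hpc : ∀ i j : Fin r, i ≤ j → p j ∣ p i)
    (H : ∀ m : ℕ, ∏ j, o j / (o j).gcd m = ∏ j, p j / (p j).gcd m)
    (i : Fin r) (hlt : ∀ j, j < i → o j = p j) (hnd : ¬ o i ∣ p i) : False := by
  classical
  set m := p i with hm
  have hH := H m
  rw [← Finset.prod_filter_mul_prod_filter_not Finset.univ (· < i)
        (fun j => o j / (o j).gcd m),
      ← Finset.prod_filter_mul_prod_filter_not Finset.univ (· < i)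
        (fun j => p j / (p j).gcd m)] at hH
  have hA : ∀ j ∈ Finset.univ.filter (· < i),
      o j / (o j).gcd m = p j / (p j).gcd m := by
    intro j hj; rw [hlt j (Finset.mem_filter.1 hj).2]
  rw [Finset.prod_congr rfl hA] at hH
  have hctail : ∏ j ∈ Finset.univ.filter (¬ · < i), (p j / (p j).gcd m) = 1 := by
    refine Finset.prod_eq_one fun j hj => ?_
    have hij : i ≤ j := le_of_not_gt (Finset.mem_filter.1 hj).2
    rw [Nat.gcd_eq_left (hpc i j hij), Nat.div_self (hppos j)]
  have h1 : ∀ j, 1 ≤ o j / (o j).gcd m := fun j =>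
    (Nat.one_le_div_iff (Nat.gcd_pos_of_pos_left _ (hopos j))).2
      (Nat.le_of_dvd (hopos j) (Nat.gcd_dvd_left _ _))
  have h2 : 2 ≤ o i / (o i).gcd m := by
    have hg : (o i).gcd m ∣ o i := Nat.gcd_dvd_left _ _
    have hne : (o i).gcd m ≠ o i := fun h => hnd (h ▸ Nat.gcd_dvd_right _ _)
    have h1i := h1 i
    by_contra hq
    have hq1 : o i / (o i).gcd m = 1 := by omega
    have hcan := Nat.div_mul_cancel hg
    rw [hq1, one_mul] at hcan
    exact hne hcan
  have htail : 2 ≤ ∏ j ∈ Finset.univ.filter (¬ · < i), (o j / (o j).gcd m) :=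
    le_trans h2 (Finset.single_le_prod' (fun j _ => h1 j)
      (Finset.mem_filter.2 ⟨Finset.mem_univ i, lt_irrefl i⟩))
  have hApos : 0 < ∏ j ∈ Finset.univ.filter (· < i), (p j / (p j).gcd m) := by
    refine Finset.prod_pos fun j hj => ?_
    have hij : j ≤ i := le_of_lt (Finset.mem_filter.1 hj).2
    rw [Nat.gcd_eq_right (hpc j i hij)]
    exact Nat.div_pos (Nat.le_of_dvd (hppos j) (hpc j i hij)) (hppos i)
  rw [hctail, mul_one] at hH
  set A := ∏ j ∈ Finset.univ.filter (· < i), (p j / (p j).gcd m) with hA'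
  set T := ∏ j ∈ Finset.univ.filter (¬ · < i), (o j / (o j).gcd m) with hT'
  have h3 : A * 2 ≤ A * T := Nat.mul_le_mul_left _ htail
  omega

/-- Uniqueness of diagonal invariants: if `diag(b₁,…,b_r)` and `diag(c₁,…,c_r)` are
diagonal basis matrices for the same submodule `M` (with respect to possibly different
free bases of `(ℤ/dℤ)^n`, divisibility chains `bᵢ ∣ bⱼ`, `cᵢ ∣ cⱼ` for `i ≤ j`),
then each `bᵢ` has the same additive order as `cᵢ`. -/
theorem stmt_11 (d n r : ℕ) (hd : 2 ≤ d) (hrn : r ≤ n)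
    (M : Submodule (ZMod d) (Fin n → ZMod d))
    (f g : Module.Basis (Fin n) (ZMod d) (Fin n → ZMod d))
    (b c : Fin r → ZMod d)
    (hb : ∀ i j : Fin r, i ≤ j → b i ∣ b j)
    (hc : ∀ i j : Fin r, i ≤ j → c i ∣ c j)
    (hbM : Submodule.span (ZMod d)
      (Set.range fun i : Fin r => b i • f (Fin.castLE hrn i)) = M)
    (hcM : Submodule.span (ZMod d)
      (Set.range fun i : Fin r => c i • g (Fin.castLE hrn i)) = M) :
    ∀ i : Fin r, addOrderOf (b i) = addOrderOf (c i) := by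
  haveI : NeZero d := ⟨by omega⟩
  set o : Fin r → ℕ := fun i => addOrderOf (b i) with ho
  set p : Fin r → ℕ := fun i => addOrderOf (c i) with hp
  have hmulord : ∀ (m : ℕ) (x : ZMod d),
      addOrderOf ((m : ZMod d) * x) = addOrderOf x / (addOrderOf x).gcd m := by
    intro m x
    rw [← nsmul_eq_mul, addOrderOf_nsmul]
  have hdvd_ord : ∀ (x y : ZMod d), x ∣ y → addOrderOf y ∣ addOrderOf x := by
    intro x y ⟨k, hk⟩
    rw [hk]
    refine addOrderOf_dvd_iff_nsmul_eq_zero.2 ?_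
    rw [← smul_mul_assoc, addOrderOf_nsmul_eq_zero, zero_mul]
  have H : ∀ m : ℕ, ∏ j, o j / (o j).gcd m = ∏ j, p j / (p j).gcd m := by
    intro m
    let μ : (Fin n → ZMod d) →ₗ[ZMod d] (Fin n → ZMod d) := (m : ZMod d) • LinearMap.id
    have hmap : ∀ (h : Module.Basis (Fin n) (ZMod d) (Fin n → ZMod d)) (w : Fin r → ZMod d),
        Submodule.map μ (Submodule.span (ZMod d)
          (Set.range fun i : Fin r => w i • h (Fin.castLE hrn i)))
        = Submodule.span (ZMod d)
          (Set.range fun i : Fin r => ((m : ZMod d) * w i) • h (Fin.castLE hrn i)) := by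
      intro h w
      have hfun : (⇑μ ∘ fun i : Fin r => w i • h (Fin.castLE hrn i))
          = fun i : Fin r => ((m : ZMod d) * w i) • h (Fin.castLE hrn i) := by
        funext i
        simp [μ, smul_smul, mul_comm]
      rw [Submodule.map_span, ← Set.range_comp, hfun]
    have hcard_b := card_span_diag hrn f (fun i => (m : ZMod d) * b i)
    have hcard_c := card_span_diag hrn g (fun i => (m : ZMod d) * c i)
    have heq : Nat.card (Submodule.span (ZMod d)
        (Set.range fun i : Fin r => ((m : ZMod d) * b i) • f (Fin.castLE hrn i)))
      = Nat.card (Submodule.span (ZMod d)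
        (Set.range fun i : Fin r => ((m : ZMod d) * c i) • g (Fin.castLE hrn i))) := by
      rw [← hmap f b, ← hmap g c, hbM, hcM]
    rw [hcard_b, hcard_c] at heq
    calc ∏ j, o j / (o j).gcd m = ∏ j, addOrderOf ((m : ZMod d) * b j) := by
          refine Finset.prod_congr rfl fun j _ => ?_
          rw [hmulord m (b j)]
      _ = ∏ j, addOrderOf ((m : ZMod d) * c j) := heq
      _ = ∏ j, p j / (p j).gcd m := by
          refine Finset.prod_congr rfl fun j _ => ?_
          rw [hmulord m (c j)]
  have hopos : ∀ i, 0 < o i := fun i => addOrderOf_pos (b i)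
  have hppos : ∀ i, 0 < p i := fun i => addOrderOf_pos (c i)
  have hoc : ∀ i j : Fin r, i ≤ j → o j ∣ o i := fun i j hij =>
    hdvd_ord (b i) (b j) (hb i j hij)
  have hpc : ∀ i j : Fin r, i ≤ j → p j ∣ p i := fun i j hij =>
    hdvd_ord (c i) (c j) (hc i j hij)
  have H' : ∀ m : ℕ, ∏ j, p j / (p j).gcd m = ∏ j, o j / (o j).gcd m :=
    fun m => (H m).symm
  have step : ∀ i : Fin r, (∀ j, j < i → o j = p j) → o i = p i := by
    intro i hlt
    by_cases h : o i ∣ p i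
    · by_cases h' : p i ∣ o i
      · exact Nat.dvd_antisymm h h'
      · exact absurd (diag_aux p o hppos hopos hoc H' i
          (fun j hj => (hlt j hj).symm) h') (fun x => x)
    · exact absurd (diag_aux o p hopos hppos hpc H i hlt h) (fun x => x)
  have main : ∀ N : ℕ, ∀ i : Fin r, i.val ≤ N → o i = p i := by
    intro N
    induction N with
    | zero =>
      intro i hi
      refine step i fun j hj => ?_
      have := Fin.lt_def.1 hj
      omega
    | succ N ihN =>
      intro i hi
      refine step i fun j hj => ?_
      have := Fin.lt_def.1 hj
      exact ihN j (by omega)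
  exact fun i => main i.val i le_rfl
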